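/- arXiv:2502.06433 — 4 statements merged into one kernel-verified Lean document; each statement's English description precedes it below -/
import Mathlib

section
/- Let n ≥ 2. Let u : ℝⁿ → ℝⁿ and 𝔲¹, …, 𝔲ⁿ⁻¹ : ℝⁿ → ℝ be of class C², and suppose 𝔲ⁱ(x', 0) = 0 for all x' ∈ ℝⁿ⁻¹ and each 1 ≤ i ≤ n−1. Define w : ℝⁿ → ℝⁿ by wⁱ := uⁱ + ∂ₙ𝔲ⁱ for 1 ≤ i ≤ n−1 and wⁿ := uⁿ − Σᵢ₌₁ⁿ⁻¹ ∂ᵢ𝔲ⁱ. Then: (i) div w = div u on ℝⁿ, so in particular w is divergence free on ℍ whenever u is; (ii) if uⁿ(x', 0) = 0 for all x', then wⁿ(x', 0) = 0 for all x'; (iii) if ∂ₙuⁱ(x', 0) = −Δ𝔲ⁱ(x', 0) for all x' and each 1 ≤ i ≤ n−1, then ∂ₙwⁱ(x', 0) = 0 for all x' and each 1 ≤ i ≤ n−1. -/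
/-- Partial derivative in direction `i` of a scalar field on `ℝⁿ`. -/
noncomputable def pd {n : ℕ} (i : Fin n) (f : (Fin n → ℝ) → ℝ) : (Fin n → ℝ) → ℝ :=
  fun x => fderiv ℝ f x (Pi.single i 1)

/-- Laplacian of a scalar field on `ℝⁿ`. -/
noncomputable def lap {n : ℕ} (f : (Fin n → ℝ) → ℝ) : (Fin n → ℝ) → ℝ :=
  fun x => ∑ i, pd i (pd i f) x


lemma contDiff_pd_one {n : ℕ} (j : Fin n) {f : (Fin n → ℝ) → ℝ} (hf : ContDiff ℝ 2 f) :
    ContDiff ℝ 1 (pd j f) :=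
  (hf.fderiv_right (le_refl 2)).clm_apply contDiff_const

lemma pd_tangential_zero {n : ℕ} {f : (Fin n → ℝ) → ℝ} {ln k : Fin n} (hk : k ≠ ln)
    (hf : Differentiable ℝ f) (h0 : ∀ y, y ln = 0 → f y = 0)
    {x : Fin n → ℝ} (hx : x ln = 0) : pd k f x = 0 := by
  set e : Fin n → ℝ := Pi.single k 1
  have hc : HasDerivAt (fun t : ℝ => x + t • e) e 0 := by
    simpa using ((hasDerivAt_id (0:ℝ)).smul_const e).const_add x
  have hc0 : x + (0:ℝ) • e = x := by simp
  have h1 : HasDerivAt (fun t : ℝ => f (x + t • e)) (fderiv ℝ f x e) 0 := by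
    have hfx : HasFDerivAt f (fderiv ℝ f x) (x + (0:ℝ) • e) := by rw [hc0]; exact (hf x).hasFDerivAt
    exact hfx.comp_hasDerivAt 0 hc
  have h2 : (fun t : ℝ => f (x + t • e)) = fun _ => 0 := by
    funext t
    apply h0
    simp [e, Pi.single_eq_of_ne (Ne.symm hk), hx]
  rw [h2] at h1
  have := h1.unique (hasDerivAt_const 0 0)
  simpa [pd] using this

lemma pd_comm {n : ℕ} {f : (Fin n → ℝ) → ℝ} (hf : ContDiff ℝ 2 f) (i j : Fin n)
    (x : Fin n → ℝ) : pd i (pd j f) x = pd j (pd i f) x := by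
  have hf' : ContDiff ℝ 1 (fderiv ℝ f) := hf.fderiv_right (le_refl 2)
  have hd : DifferentiableAt ℝ (fderiv ℝ f) x := (hf'.differentiable one_ne_zero) x
  have key : ∀ k c : Fin n, pd c (pd k f) x
      = fderiv ℝ (fderiv ℝ f) x (Pi.single c 1) (Pi.single k 1) := by
    intro k c
    have h : pd k f = fun y => (fderiv ℝ f y) (Pi.single k 1) := rfl
    simp only [pd, h, fderiv_clm_apply hd (differentiableAt_const _)]
    simp
  rw [key, key]
  exact second_derivative_symmetric
    (fun y => ((hf.differentiable two_ne_zero) y).hasFDerivAt) hd.hasFDerivAt _ _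

lemma pd_add {n : ℕ} (i : Fin n) {g h : (Fin n → ℝ) → ℝ} {x : Fin n → ℝ}
    (hg : DifferentiableAt ℝ g x) (hh : DifferentiableAt ℝ h x) :
    pd i (fun y => g y + h y) x = pd i g x + pd i h x := by
  simp [pd, fderiv_fun_add hg hh]

lemma pd_sub_sum {n m : ℕ} (i : Fin n) {g : (Fin n → ℝ) → ℝ} {F : Fin m → (Fin n → ℝ) → ℝ}
    {x : Fin n → ℝ} (hg : DifferentiableAt ℝ g x)
    (hF : ∀ j, DifferentiableAt ℝ (F j) x) :
    pd i (fun y => g y - ∑ j, F j y) x = pd i g x - ∑ j, pd i (F j) x := by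
  have hs : DifferentiableAt ℝ (fun y => ∑ j, F j y) x :=
    DifferentiableAt.fun_sum fun j _ => hF j
  simp [pd, fderiv_fun_sub hg hs, fderiv_fun_sum (fun j _ => hF j)]

/-- Reduction of inhomogeneous Navier data to perfect slip in the half-space:
given `C²` fields `u : ℝⁿ → ℝⁿ` and `𝔲¹, …, 𝔲ⁿ⁻¹ : ℝⁿ → ℝ` vanishing on the flat
boundary `{xₙ = 0}`, the modified field `wⁱ = uⁱ + ∂ₙ𝔲ⁱ` (for `i < n`),
`wⁿ = uⁿ − Σᵢ ∂ᵢ𝔲ⁱ` satisfies: (i) `div w = div u`; (ii) `wⁿ = 0` on the boundary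
whenever `uⁿ = 0` there; (iii) `∂ₙwⁱ = 0` on the boundary (for `i < n`) whenever
`∂ₙuⁱ = −Δ𝔲ⁱ` there. Here `ln` is the last coordinate index and `ι` the inclusion
of the first `n − 1` indices. -/
theorem stmt6 (n : ℕ) (hn : 2 ≤ n) (ln : Fin n) (hln : (ln : ℕ) = n - 1)
    (ι : Fin (n - 1) → Fin n) (hι : ∀ i, (ι i : ℕ) = (i : ℕ))
    (u : (Fin n → ℝ) → Fin n → ℝ) (hu : ContDiff ℝ 2 u)
    (v : Fin (n - 1) → (Fin n → ℝ) → ℝ) (hv : ∀ i, ContDiff ℝ 2 (v i))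
    (hv0 : ∀ i, ∀ x, x ln = 0 → v i x = 0)
    (w : (Fin n → ℝ) → Fin n → ℝ)
    (hw : ∀ x i, w x i =
      if h : (i : ℕ) < n - 1 then u x i + pd ln (v ⟨i, h⟩) x
      else u x i - ∑ j, pd (ι j) (v j) x) :
    (∀ x, ∑ i, pd i (fun y => w y i) x = ∑ i, pd i (fun y => u y i) x) ∧
    ((∀ x, x ln = 0 → u x ln = 0) → ∀ x, x ln = 0 → w x ln = 0) ∧
    ((∀ i, ∀ x, x ln = 0 → pd ln (fun y => u y (ι i)) x = -(lap (v i) x)) →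
      ∀ i, ∀ x, x ln = 0 → pd ln (fun y => w y (ι i)) x = 0) := by
  classical
  have hιne : ∀ j : Fin (n-1), ι j ≠ ln := by
    intro j h
    have h1 := hι j
    have h2 := j.isLt
    rw [h, hln] at h1
    omega
  have hlt_of_ne : ∀ i : Fin n, i ≠ ln → (i : ℕ) < n - 1 := by
    intro i hi
    have h1 := i.isLt
    have h2 : (i : ℕ) ≠ n - 1 := fun h => hi (Fin.ext (h.trans hln.symm))
    omega
  have hι_inj : Function.Injective ι := fun a b h => Fin.ext (by rw [← hι a, ← hι b, h])
  have himg : (Finset.univ : Finset (Fin n)).erase ln = Finset.image ι Finset.univ := by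
    ext i
    simp only [Finset.mem_erase, Finset.mem_univ, and_true, Finset.mem_image, true_and]
    constructor
    · intro hi
      exact ⟨⟨i, hlt_of_ne i hi⟩, Fin.ext (hι _)⟩
    · rintro ⟨j, rfl⟩
      exact hιne j
  have hsum : ∀ F : Fin n → ℝ, ∑ i, F i = (∑ j, F (ι j)) + F ln := by
    intro F
    rw [← Finset.sum_erase_add _ _ (Finset.mem_univ ln), himg,
      Finset.sum_image (fun a _ b _ h => hι_inj h)]
  have hwι : ∀ j : Fin (n-1), (fun y => w y (ι j)) = fun y => u y (ι j) + pd ln (v j) y := by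
    intro j
    funext y
    have hj : ((ι j : Fin n) : ℕ) < n - 1 := by rw [hι]; exact j.isLt
    have hje : (⟨(ι j : ℕ), hj⟩ : Fin (n-1)) = j := Fin.ext (hι j)
    rw [hw, dif_pos hj, hje]
  have hwln2 : (fun y => w y ln) = fun y => u y ln - ∑ j, pd (ι j) (v j) y := by
    funext y
    rw [hw, dif_neg (by omega)]
  have hud : ∀ i, ContDiff ℝ 2 fun y => u y i := contDiff_pi.mp hu
  have hudd : ∀ (i : Fin n) (x), DifferentiableAt ℝ (fun y => u y i) x := fun i x =>
    ((hud i).differentiable two_ne_zero) x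
  have hpdvd : ∀ (k : Fin n) (j : Fin (n-1)) (x), DifferentiableAt ℝ (pd k (v j)) x :=
    fun k j x => ((contDiff_pd_one k (hv j)).differentiable one_ne_zero) x
  refine ⟨?_, ?_, ?_⟩
  · intro x
    rw [hsum (fun i => pd i (fun y => w y i) x), hsum (fun i => pd i (fun y => u y i) x),
      hwln2, pd_sub_sum ln (hudd ln x) (fun j => hpdvd (ι j) j x)]
    have h1 : ∀ j : Fin (n-1), pd (ι j) (fun y => w y (ι j)) x
        = pd (ι j) (fun y => u y (ι j)) x + pd ln (pd (ι j) (v j)) x := by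
      intro j
      rw [hwι j, pd_add (ι j) (hudd _ x) (hpdvd ln j x), pd_comm (hv j)]
    simp only [h1]
    rw [Finset.sum_add_distrib]
    ring
  · intro hu0 x hx
    have h := hw x ln
    rw [dif_neg (by omega), hu0 x hx] at h
    have hz : ∀ j, pd (ι j) (v j) x = 0 := fun j =>
      pd_tangential_zero (hιne j) ((hv j).differentiable two_ne_zero) (hv0 j) hx
    simp [h, hz]
  · intro hb i x hx
    rw [hwι i, pd_add ln (hudd _ x) (hpdvd ln i x), hb i x hx]
    have hlap : lap (v i) x = pd ln (pd ln (v i)) x := by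
      show ∑ k, pd k (pd k (v i)) x = _
      rw [hsum (fun k => pd k (pd k (v i)) x)]
      have hz : ∀ j : Fin (n-1), pd (ι j) (pd (ι j) (v i)) x = 0 := by
        intro j
        refine pd_tangential_zero (hιne j) (fun y => hpdvd (ι j) i y) ?_ hx
        intro y hy
        exact pd_tangential_zero (hιne j) ((hv i).differentiable two_ne_zero) (hv0 i) hy
      simp [hz]
    rw [hlap]
    ring
end

section
/- Let n ≥ 2, let u : ℝⁿ → ℝⁿ be of class C² and let φ : ℝⁿ → ℝⁿ be of class C¹ with compact support. Assume div u = 0 on ℍ and uⁿ(x', 0) = φⁿ(x', 0) = 0 for all x' ∈ ℝⁿ⁻¹. Then ∫_ℍ Σᵢⱼ (∂ⱼuⁱ)(∂ᵢφʲ) dx = 0; consequently ∫_ℍ 2 ε(u) : ε(φ) dx = ∫_ℍ ∇u : ∇φ dx, where ε(v) := ½(∇v + ∇vᵀ) is the symmetric gradient and M : N := Σᵢⱼ Mᵢⱼ Nᵢⱼ. -/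
open MeasureTheory

namespace Stmt11Aux

open Set


variable {n : ℕ}

lemma pd_mul {g h : (Fin n → ℝ) → ℝ} {x} (hg : DifferentiableAt ℝ g x)
    (hh : DifferentiableAt ℝ h x) (k : Fin n) :
    pd k (fun y => g y * h y) x = pd k g x * h x + g x * pd k h x := by
  unfold pd
  rw [fderiv_fun_mul hg hh]
  simp only [ContinuousLinearMap.add_apply, ContinuousLinearMap.smul_apply, smul_eq_mul]
  ring

lemma pd_sum {ι : Type*} (s : Finset ι) {g : ι → (Fin n → ℝ) → ℝ} {x}
    (hg : ∀ i ∈ s, DifferentiableAt ℝ (g i) x) (k : Fin n) :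
    pd k (fun y => ∑ i ∈ s, g i y) x = ∑ i ∈ s, pd k (g i) x := by
  unfold pd
  rw [fderiv_fun_sum hg]
  simp

lemma contDiff_pd_one {g : (Fin n → ℝ) → ℝ} (hg : ContDiff ℝ 2 g) (j : Fin n) :
    ContDiff ℝ 1 (pd j g) := by
  have h1 : ContDiff ℝ 1 (fderiv ℝ g) := hg.fderiv_right (by norm_num)
  exact (ContinuousLinearMap.apply ℝ ℝ ((Pi.single j 1 : Fin n → ℝ))).contDiff.comp h1

lemma continuous_pd {g : (Fin n → ℝ) → ℝ} (hg : ContDiff ℝ 1 g) (j : Fin n) :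
    Continuous (pd j g) :=
  (ContinuousLinearMap.apply ℝ ℝ ((Pi.single j 1 : Fin n → ℝ))).continuous.comp
    (hg.continuous_fderiv one_ne_zero)

lemma pd_eventually_zero {g : (Fin n → ℝ) → ℝ} {x : Fin n → ℝ}
    (h : ∀ᶠ y in nhds x, g y = 0) (j : Fin n) : pd j g x = 0 := by
  unfold pd
  have : g =ᶠ[nhds x] (fun _ => (0:ℝ)) := h
  rw [this.fderiv_eq]
  simp

lemma pd_tangential {ln : Fin n} {g : (Fin n → ℝ) → ℝ} (hg : Differentiable ℝ g)
    (hzero : ∀ y, y ln = 0 → g y = 0) {x : Fin n → ℝ} (hx : x ln = 0) {j : Fin n}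
    (hj : j ≠ ln) : pd j g x = 0 := by
  have hline : HasDerivAt (fun t : ℝ => x + t • (Pi.single j 1 : Fin n → ℝ))
      (Pi.single j 1) 0 := by
    simpa using ((hasDerivAt_id (0:ℝ)).smul_const (Pi.single j 1 : Fin n → ℝ)).const_add x
  have h1 : HasDerivAt (fun t : ℝ => g (x + t • (Pi.single j 1 : Fin n → ℝ)))
      (fderiv ℝ g x (Pi.single j 1)) 0 := by
    have h0 : HasFDerivAt g (fderiv ℝ g x) (x + (0:ℝ) • (Pi.single j 1 : Fin n → ℝ)) := by
      simpa using (hg x).hasFDerivAt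
    exact h0.comp_hasDerivAt 0 hline
  have h2 : (fun t : ℝ => g (x + t • (Pi.single j 1 : Fin n → ℝ))) = fun _ => 0 := by
    funext t
    apply hzero
    have : (Pi.single j 1 : Fin n → ℝ) ln = 0 := Pi.single_eq_of_ne (Ne.symm hj) 1
    simp [hx, this]
  rw [h2] at h1
  have := h1.unique (hasDerivAt_const 0 0)
  exact this.symm ▸ rfl

lemma pd_comm {g : (Fin n → ℝ) → ℝ} (hg : ContDiff ℝ 2 g) (j k : Fin n) (x : Fin n → ℝ) :
    pd k (pd j g) x = pd j (pd k g) x := by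
  have H := hg.contDiffAt (x := x) |>.isSymmSndFDerivAt (by rw [minSmoothness_of_isRCLikeNormedField])
  have hd : DifferentiableAt ℝ (fderiv ℝ g) x :=
    (hg.fderiv_right (le_refl _)).differentiable one_ne_zero x
  have key : ∀ v w : Fin n → ℝ, fderiv ℝ (fun y => fderiv ℝ g y v) x w
      = fderiv ℝ (fderiv ℝ g) x w v := by
    intro v w
    rw [fderiv_clm_apply hd (differentiableAt_const v)]
    simp
  show fderiv ℝ (fun y => fderiv ℝ g y (Pi.single j 1)) x (Pi.single k 1)
      = fderiv ℝ (fun y => fderiv ℝ g y (Pi.single k 1)) x (Pi.single j 1)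
  rw [key, key]
  exact H _ _

lemma hcs_pd {g : (Fin n → ℝ) → ℝ} (hg : HasCompactSupport g) (j : Fin n) :
    HasCompactSupport (pd j g) := by
  have h1 : HasCompactSupport (fderiv ℝ g) := hg.fderiv ℝ
  exact h1.comp_left (g := fun L : (Fin n → ℝ) →L[ℝ] ℝ => L (Pi.single j 1)) rfl


lemma integrable_mix {n : ℕ} {u φ : (Fin n → ℝ) → Fin n → ℝ}
    (hu : ContDiff ℝ 2 u) (hφ : ContDiff ℝ 1 φ) (hφs : HasCompactSupport φ)
    (f₁ f₂ g₁ g₂ : Fin n → Fin n → Fin n) :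
    Integrable (fun x => ∑ i, ∑ j,
      pd (f₁ i j) (fun y => u y (f₂ i j)) x * pd (g₁ i j) (fun y => φ y (g₂ i j)) x) := by
  apply Continuous.integrable_of_hasCompactSupport
  · exact continuous_finset_sum _ fun i _ => continuous_finset_sum _ fun j _ =>
      ((contDiff_pd_one (contDiff_pi.1 hu _) _).continuous).mul
        (continuous_pd (contDiff_pi.1 hφ _) _)
  · refine HasCompactSupport.intro hφs fun x hx => ?_
    have h0 : ∀ (i j : Fin n), pd i (fun y => φ y j) x = 0 := by
      intro i j
      apply pd_eventually_zero
      filter_upwards [(isClosed_tsupport φ).isOpen_compl.mem_nhds hx] with y hy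
      have := image_eq_zero_of_notMem_tsupport hy
      simp [this]
    simp [h0]

lemma part1 {m : ℕ} (ln : Fin (m + 1)) (u φ : (Fin (m + 1) → ℝ) → Fin (m + 1) → ℝ)
    (hu : ContDiff ℝ 2 u) (hφ : ContDiff ℝ 1 φ) (hφs : HasCompactSupport φ)
    (hdiv : ∀ x, 0 < x ln → ∑ i, pd i (fun y => u y i) x = 0)
    (hub : ∀ x, x ln = 0 → u x ln = 0)
    (hφb : ∀ x, x ln = 0 → φ x ln = 0) :
    (∫ x in {x : Fin (m + 1) → ℝ | 0 < x ln},
        ∑ i, ∑ j, pd j (fun y => u y i) x * pd i (fun y => φ y j) x) = 0 := by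
  classical
  have hui : ∀ i, ContDiff ℝ 2 (fun y => u y i) := fun i => contDiff_pi.1 hu i
  have hφj : ∀ j, ContDiff ℝ 1 (fun y => φ y j) := fun j => contDiff_pi.1 hφ j
  have hpdu : ∀ j i, ContDiff ℝ 1 (pd j (fun y => u y i)) := fun j i =>
    contDiff_pd_one (hui i) j
  set G : (Fin (m + 1) → ℝ) → ℝ := fun x =>
    ∑ i, ∑ j, pd j (fun y => u y i) x * pd i (fun y => φ y j) x with hG
  have hGvan : ∀ x, x ∉ tsupport φ → G x = 0 := by
    intro x hx
    have h0 : ∀ i j, pd i (fun y => φ y j) x = 0 := by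
      intro i j
      apply pd_eventually_zero
      filter_upwards [(isClosed_tsupport φ).isOpen_compl.mem_nhds hx] with y hy
      have := image_eq_zero_of_notMem_tsupport hy
      simp [this]
    simp [hG, h0]
  -- radius
  obtain ⟨r, hr⟩ := hφs.isBounded.subset_closedBall 0
  set R : ℝ := |r| + 1 with hRdef
  have hR0 : 0 < R := by positivity
  have hφRt : ∀ x : Fin (m + 1) → ℝ, (∃ i, R ≤ |x i|) → x ∉ tsupport φ := by
    rintro x ⟨i, hi⟩ hmem
    have h1 : ‖x‖ ≤ r := by simpa using hr hmem
    have h2 : |x i| ≤ ‖x‖ := by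
      simpa [Real.norm_eq_abs] using norm_le_pi_norm x i
    have h3 : r < R := by rw [hRdef]; nlinarith [abs_nonneg r, le_abs_self r]
    linarith
  have hφR0 : ∀ x : Fin (m + 1) → ℝ, (∃ i, R ≤ |x i|) → φ x = 0 := fun x hx =>
    image_eq_zero_of_notMem_tsupport (hφRt x hx)
  -- box
  set a : Fin (m + 1) → ℝ := fun i => if i = ln then 0 else -R with ha
  set b : Fin (m + 1) → ℝ := fun _ => R with hb
  have hle : a ≤ b := by
    intro i
    rw [ha, hb]
    dsimp only
    split <;> linarith
  -- vector field
  set F : Fin (m + 1) → (Fin (m + 1) → ℝ) → ℝ := fun k x =>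
    ∑ j, pd j (fun y => u y k) x * φ x j with hF
  have hFc : ∀ k, ContDiff ℝ 1 (F k) := fun k =>
    ContDiff.sum fun j _ => (hpdu j k).mul (hφj j)
  have hFd : ∀ k, Differentiable ℝ (F k) := fun k => (hFc k).differentiable one_ne_zero
  have hdt := integral_divergence_of_hasFDerivAt_off_countable' a b hle F
    (fun k x => fderiv ℝ (F k) x) ∅ countable_empty
    (fun k => (hFc k).continuous.continuousOn)
    (fun x _ k => ((hFd k) x).hasFDerivAt)
    (by
      apply ContinuousOn.integrableOn_compact isCompact_Icc
      refine Continuous.continuousOn ?_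
      exact continuous_finset_sum _ fun k _ =>
        (ContinuousLinearMap.apply ℝ ℝ ((Pi.single k 1 : Fin (m+1) → ℝ))).continuous.comp
          ((hFc k).continuous_fderiv one_ne_zero))
  -- faces vanish
  have hfront : ∀ (i : Fin (m+1)) (y : Fin m → ℝ), F i (i.insertNth (b i) y) = 0 := by
    intro i y
    have hφ0 : φ (i.insertNth (b i) y) = 0 := by
      apply hφR0
      refine ⟨i, ?_⟩
      rw [Fin.insertNth_apply_same, hb]
      simp [abs_of_pos hR0]
    rw [hF]
    simp [hφ0]
  have hback : ∀ (i : Fin (m+1)) (y : Fin m → ℝ), F i (i.insertNth (a i) y) = 0 := by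
    intro i y
    by_cases hi : i = ln
    · subst hi
      have hz : (Fin.insertNth i (a i) y : Fin (m+1) → ℝ) i = 0 := by
        simp [Fin.insertNth_apply_same, ha]
      rw [hF]
      dsimp only
      apply Finset.sum_eq_zero
      intro j _
      by_cases hj : j = i
      · subst hj
        rw [hφb _ hz, mul_zero]
      · rw [pd_tangential ((hui i).differentiable two_ne_zero) (fun z hz' => hub z hz') hz hj,
          zero_mul]
    · have hφ0 : φ (i.insertNth (a i) y) = 0 := by
        apply hφR0
        refine ⟨i, ?_⟩
        rw [Fin.insertNth_apply_same, ha]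
        simp [hi, abs_of_pos hR0]
      rw [hF]
      simp [hφ0]
  have hzero : (∫ x in Icc a b, ∑ k, fderiv ℝ (F k) x (Pi.single k 1)) = 0 := by
    rw [hdt]
    apply Finset.sum_eq_zero
    intro i _
    simp [hfront, hback]
  -- interior identity
  have hkey : ∀ x ∈ Set.pi univ fun i => Ioo (a i) (b i),
      (∑ k, fderiv ℝ (F k) x (Pi.single k 1)) = G x := by
    intro x hx
    have hxln : 0 < x ln := by
      have h1 := (hx ln (mem_univ ln)).1
      rw [ha] at h1
      simpa using h1
    have hev : ∀ᶠ y in nhds x, (∑ k, pd k (fun z => u z k) y) = 0 := by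
      have hopen : IsOpen {y : Fin (m+1) → ℝ | 0 < y ln} :=
        isOpen_lt continuous_const (continuous_apply ln)
      filter_upwards [hopen.mem_nhds hxln] with y hy using hdiv y hy
    calc ∑ k, fderiv ℝ (F k) x (Pi.single k 1)
        = ∑ k, ∑ j, (pd k (pd j (fun y => u y k)) x * φ x j
            + pd j (fun y => u y k) x * pd k (fun y => φ y j) x) := by
          refine Finset.sum_congr rfl fun k _ => ?_
          show pd k (F k) x = _
          rw [hF]
          dsimp only
          rw [pd_sum (g := fun j y => pd j (fun y => u y k) y * φ y j) Finset.univ (fun j _ => (((hpdu j k).differentiable one_ne_zero x).mul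
            (((hφj j).differentiable one_ne_zero) x))) k]
          exact Finset.sum_congr rfl fun j _ => pd_mul ((hpdu j k).differentiable one_ne_zero x)
            (((hφj j).differentiable one_ne_zero) x) k
      _ = (∑ k, ∑ j, pd k (pd j (fun y => u y k)) x * φ x j) + G x := by
          rw [hG]
          rw [← Finset.sum_add_distrib]
          refine Finset.sum_congr rfl fun k _ => ?_
          rw [← Finset.sum_add_distrib]
      _ = 0 + G x := by
          congr 1
          have hj0 : ∀ j : Fin (m+1), (∑ k, pd k (pd j (fun y => u y k)) x) = 0 := by
            intro j
            have h1 : (∑ k, pd k (pd j (fun y => u y k)) x)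
                = ∑ k, pd j (pd k (fun y => u y k)) x :=
              Finset.sum_congr rfl fun k _ => pd_comm (hui k) j k x
            rw [h1, ← pd_sum Finset.univ (fun k _ => (hpdu k k).differentiable one_ne_zero x) j]
            exact pd_eventually_zero hev j
          rw [Finset.sum_comm]
          refine Finset.sum_eq_zero fun j _ => ?_
          rw [← Finset.sum_mul, hj0 j, zero_mul]
      _ = G x := zero_add _
  have hset : (Set.pi univ fun i => Ioo (a i) (b i))
      =ᵐ[(volume : Measure (Fin (m+1) → ℝ))] Icc a b := by
    rw [MeasureTheory.volume_pi]
    exact Measure.univ_pi_Ioo_ae_eq_Icc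
  have hIccG : (∫ x in Icc a b, G x) = 0 := by
    calc (∫ x in Icc a b, G x)
        = ∫ x in (Set.pi univ fun i => Ioo (a i) (b i)), G x :=
          (setIntegral_congr_set hset).symm
      _ = ∫ x in (Set.pi univ fun i => Ioo (a i) (b i)),
            ∑ k, fderiv ℝ (F k) x (Pi.single k 1) :=
          setIntegral_congr_fun (MeasurableSet.univ_pi fun i => measurableSet_Ioo)
            fun x hx => (hkey x hx).symm
      _ = ∫ x in Icc a b, ∑ k, fderiv ℝ (F k) x (Pi.single k 1) := setIntegral_congr_set hset
      _ = 0 := hzero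
  -- from Icc to half-space
  have hGc : Continuous G := by
    refine continuous_finset_sum _ fun i _ => continuous_finset_sum _ fun j _ => ?_
    exact ((hpdu j i).continuous).mul (continuous_pd (hφj j) i)
  have hGcs : HasCompactSupport G := HasCompactSupport.intro hφs hGvan
  have hGint : Integrable G := hGc.integrable_of_hasCompactSupport hGcs
  have hmeasH : MeasurableSet {x : Fin (m+1) → ℝ | 0 < x ln} :=
    (isOpen_lt continuous_const (continuous_apply ln)).measurableSet
  have hhyper : (volume : Measure (Fin (m+1) → ℝ)) {x | x ln = 0} = 0 := by
    have := Measure.pi_hyperplane (fun _ : Fin (m+1) => (volume : Measure ℝ)) ln (0:ℝ)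
    rw [MeasureTheory.volume_pi]
    exact this
  have hindeq : Set.indicator {x : Fin (m+1) → ℝ | 0 < x ln} G
      =ᵐ[volume] Set.indicator (Icc a b) G := by
    have hae : ∀ᵐ x : Fin (m+1) → ℝ, x ln ≠ 0 := by
      rw [ae_iff]
      simpa using hhyper
    filter_upwards [hae] with x hx
    by_cases hpos : 0 < x ln
    · have hposm : x ∈ {y : Fin (m+1) → ℝ | 0 < y ln} := hpos
      by_cases hmem : x ∈ Icc a b
      · rw [indicator_of_mem hposm, indicator_of_mem hmem]
      · have hout : ∃ i, R ≤ |x i| := by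
          by_cases hab : ∀ i, a i ≤ x i
          · have hnb : ¬ ∀ i, x i ≤ b i := fun h => hmem ⟨fun i => hab i, fun i => h i⟩
            obtain ⟨i, hi⟩ := not_forall.1 hnb
            have hbR : (R : ℝ) < x i := not_le.1 hi
            exact ⟨i, le_trans hbR.le (le_abs_self _)⟩
          · obtain ⟨i, hi⟩ := not_forall.1 hab
            have hi' : x i < a i := not_le.1 hi
            by_cases hiln : i = ln
            · exfalso
              rw [hiln] at hi'
              have haln : a ln = 0 := by rw [ha]; simp
              rw [haln] at hi'
              linarith
            · have hai : a i = -R := by rw [ha]; simp [hiln]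
              rw [hai] at hi'
              exact ⟨i, le_trans (by linarith : R ≤ -(x i)) (neg_le_abs _)⟩
        have hGx : G x = 0 := hGvan x (hφRt x hout)
        rw [indicator_of_mem hposm, indicator_of_notMem hmem, hGx]
    · have hneg : x ln < 0 := lt_of_le_of_ne (not_lt.1 hpos) hx
      have hposm : x ∉ {y : Fin (m+1) → ℝ | 0 < y ln} := hpos
      have hmem : x ∉ Icc a b := by
        intro hmem
        have h1 := hmem.1 ln
        have haln : a ln = 0 := by rw [ha]; simp
        rw [haln] at h1
        linarith
      rw [indicator_of_notMem hposm, indicator_of_notMem hmem]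
  show (∫ x in {x : Fin (m + 1) → ℝ | 0 < x ln}, G x) = 0
  calc (∫ x in {x : Fin (m + 1) → ℝ | 0 < x ln}, G x)
      = ∫ x, Set.indicator {x : Fin (m+1) → ℝ | 0 < x ln} G x := (integral_indicator hmeasH).symm
    _ = ∫ x, Set.indicator (Icc a b) G x := integral_congr_ae hindeq
    _ = ∫ x in Icc a b, G x := integral_indicator measurableSet_Icc
    _ = 0 := hIccG

end Stmt11Aux

/-- For a `C²` field `u` with `div u = 0` on the upper half-space `ℍ` and `uⁿ = 0` on the
flat boundary, and a compactly supported `C¹` field `φ` with `φⁿ = 0` on the boundary,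
one has `∫_ℍ Σᵢⱼ ∂ⱼuⁱ ∂ᵢφʲ dx = 0`; consequently `∫_ℍ 2 ε(u):ε(φ) dx = ∫_ℍ ∇u:∇φ dx`,
where `ε(v) = ½(∇v + ∇vᵀ)` is the symmetric gradient. Here `ln` is the last index. -/
theorem stmt11 (n : ℕ) (hn : 2 ≤ n) (ln : Fin n) (hln : (ln : ℕ) = n - 1)
    (u φ : (Fin n → ℝ) → Fin n → ℝ)
    (hu : ContDiff ℝ 2 u) (hφ : ContDiff ℝ 1 φ) (hφs : HasCompactSupport φ)
    (hdiv : ∀ x, 0 < x ln → ∑ i, pd i (fun y => u y i) x = 0)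
    (hub : ∀ x, x ln = 0 → u x ln = 0)
    (hφb : ∀ x, x ln = 0 → φ x ln = 0) :
    (∫ x in {x : Fin n → ℝ | 0 < x ln},
        ∑ i, ∑ j, pd j (fun y => u y i) x * pd i (fun y => φ y j) x) = 0 ∧
    (∫ x in {x : Fin n → ℝ | 0 < x ln}, ∑ i, ∑ j,
        2 * (((pd j (fun y => u y i) x + pd i (fun y => u y j) x) / 2) *
          ((pd j (fun y => φ y i) x + pd i (fun y => φ y j) x) / 2))) =
      ∫ x in {x : Fin n → ℝ | 0 < x ln},
        ∑ i, ∑ j, pd j (fun y => u y i) x * pd j (fun y => φ y i) x := by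
  obtain ⟨m, rfl⟩ : ∃ m, n = m + 1 := ⟨n - 1, by omega⟩
  have h1 := Stmt11Aux.part1 ln u φ hu hφ hφs hdiv hub hφb
  refine ⟨h1, ?_⟩
  have hpt : ∀ x : Fin (m+1) → ℝ,
      (∑ i, ∑ j, 2 * (((pd j (fun y => u y i) x + pd i (fun y => u y j) x) / 2) *
          ((pd j (fun y => φ y i) x + pd i (fun y => φ y j) x) / 2)))
      = (∑ i, ∑ j, pd j (fun y => u y i) x * pd j (fun y => φ y i) x)
        + (∑ i, ∑ j, pd j (fun y => u y i) x * pd i (fun y => φ y j) x) := by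
    intro x
    set A : Fin (m+1) → Fin (m+1) → ℝ := fun i j => pd j (fun y => u y i) x with hA
    set C : Fin (m+1) → Fin (m+1) → ℝ := fun i j => pd j (fun y => φ y i) x with hC
    have hsum1 : (∑ i, ∑ j, (A i j * C i j + A j i * C j i)/2)
        = ∑ i, ∑ j, A i j * C i j := by
      simp only [add_div, Finset.sum_add_distrib]
      rw [show (∑ i, ∑ j, A j i * C j i / 2) = ∑ i, ∑ j, A i j * C i j / 2 from
        Finset.sum_comm]
      rw [← Finset.sum_add_distrib]
      refine Finset.sum_congr rfl fun i _ => ?_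
      rw [← Finset.sum_add_distrib]
      refine Finset.sum_congr rfl fun j _ => ?_
      ring
    have hsum2 : (∑ i, ∑ j, (A i j * C j i + A j i * C i j)/2)
        = ∑ i, ∑ j, A i j * C j i := by
      simp only [add_div, Finset.sum_add_distrib]
      rw [show (∑ i, ∑ j, A j i * C i j / 2) = ∑ i, ∑ j, A i j * C j i / 2 from
        Finset.sum_comm]
      rw [← Finset.sum_add_distrib]
      refine Finset.sum_congr rfl fun i _ => ?_
      rw [← Finset.sum_add_distrib]
      refine Finset.sum_congr rfl fun j _ => ?_
      ring
    calc (∑ i, ∑ j, 2 * (((A i j + A j i) / 2) * ((C i j + C j i) / 2)))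
        = ∑ i, ∑ j, ((A i j * C i j + A j i * C j i)/2 + (A i j * C j i + A j i * C i j)/2) :=
          Finset.sum_congr rfl fun i _ => Finset.sum_congr rfl fun j _ => by ring
      _ = (∑ i, ∑ j, (A i j * C i j + A j i * C j i)/2)
            + ∑ i, ∑ j, (A i j * C j i + A j i * C i j)/2 := by
          simp [Finset.sum_add_distrib]
      _ = (∑ i, ∑ j, A i j * C i j) + (∑ i, ∑ j, A i j * C j i) := by
          rw [hsum1, hsum2]
  have hi1 : IntegrableOn (fun x => ∑ i, ∑ j,
      pd j (fun y => u y i) x * pd j (fun y => φ y i) x)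
      {x : Fin (m+1) → ℝ | 0 < x ln} volume := by
    exact (Stmt11Aux.integrable_mix hu hφ hφs (fun i j => j) (fun i j => i)
      (fun i j => j) (fun i j => i)).integrableOn
  have hi2 : IntegrableOn (fun x => ∑ i, ∑ j,
      pd j (fun y => u y i) x * pd i (fun y => φ y j) x)
      {x : Fin (m+1) → ℝ | 0 < x ln} volume := by
    exact (Stmt11Aux.integrable_mix hu hφ hφs (fun i j => j) (fun i j => i)
      (fun i j => i) (fun i j => j)).integrableOn
  calc (∫ x in {x : Fin (m+1) → ℝ | 0 < x ln}, ∑ i, ∑ j,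
        2 * (((pd j (fun y => u y i) x + pd i (fun y => u y j) x) / 2) *
          ((pd j (fun y => φ y i) x + pd i (fun y => φ y j) x) / 2)))
      = ∫ x in {x : Fin (m+1) → ℝ | 0 < x ln},
          ((∑ i, ∑ j, pd j (fun y => u y i) x * pd j (fun y => φ y i) x)
            + (∑ i, ∑ j, pd j (fun y => u y i) x * pd i (fun y => φ y j) x)) :=
        integral_congr_ae (Filter.Eventually.of_forall fun x => hpt x)
    _ = (∫ x in {x : Fin (m+1) → ℝ | 0 < x ln},
          ∑ i, ∑ j, pd j (fun y => u y i) x * pd j (fun y => φ y i) x)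
        + ∫ x in {x : Fin (m+1) → ℝ | 0 < x ln},
          ∑ i, ∑ j, pd j (fun y => u y i) x * pd i (fun y => φ y j) x :=
        integral_add hi1 hi2
    _ = ∫ x in {x : Fin (m+1) → ℝ | 0 < x ln},
          ∑ i, ∑ j, pd j (fun y => u y i) x * pd j (fun y => φ y i) x := by
        rw [h1, add_zero]
end

section
/- Let φ : ℝⁿ⁻¹ → ℝ be Lipschitz with constant K. Then 𝒯φ is smooth on the open upper half-space ℍ and |∂_{zₙ}(𝒯φ)(z', zₙ)| ≤ c K for all (z', zₙ) ∈ ℍ, where c := ∫_{ℝⁿ⁻¹} |(n−1)ζ(s) + s·∇ζ(s)|·|s| ds is a constant depending only on n and ζ. -/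
open MeasureTheory Metric

lemma cov {d : ℕ} (g : (Fin d → ℝ) → ℝ) (x : Fin d → ℝ) {t : ℝ} (ht : 0 < t) :
    ∫ y, g (t⁻¹ • (x - y)) = t ^ d * ∫ s, g s := by
  calc ∫ y : Fin d → ℝ, g (t⁻¹ • (x - y))
      = ∫ u : Fin d → ℝ, g (t⁻¹ • u) := integral_sub_left_eq_self (fun u => g (t⁻¹ • u)) volume x
    _ = t ^ d * ∫ s, g s := by
        rw [MeasureTheory.Measure.integral_comp_inv_smul_of_nonneg volume g ht.le]
        simp [Module.finrank_fintype_fun_eq_card]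

lemma kderiv (d : ℕ) (hd : 1 ≤ d) (ζ : (Fin d → ℝ) → ℝ) (hζ : ContDiff ℝ (⊤ : ℕ∞) ζ)
    (u : Fin d → ℝ) {t : ℝ} (ht : 0 < t) :
    HasDerivAt (fun t : ℝ => (t ^ d)⁻¹ * ζ (t⁻¹ • u))
      (-((t ^ d)⁻¹ * t⁻¹) * ((d : ℝ) * ζ (t⁻¹ • u) + fderiv ℝ ζ (t⁻¹ • u) (t⁻¹ • u))) t := by
  have htne : t ≠ 0 := ht.ne'
  have h2 : HasDerivAt (fun t : ℝ => (t ^ d)⁻¹) (-(↑d * t ^ (d - 1)) / (t ^ d) ^ 2) t :=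
    (hasDerivAt_pow d t).inv (pow_ne_zero _ htne)
  have h3 : HasDerivAt (fun t : ℝ => t⁻¹ • u) ((-(t ^ 2)⁻¹) • u) t :=
    (hasDerivAt_inv htne).smul_const u
  have hdiff : Differentiable ℝ ζ := hζ.differentiable (by simp)
  have h4 : HasFDerivAt ζ (fderiv ℝ ζ (t⁻¹ • u)) (t⁻¹ • u) := (hdiff (t⁻¹ • u)).hasFDerivAt
  have h5 := h4.comp_hasDerivAt t h3
  have h6 := h2.mul h5
  convert h6 using 1
  case e'_4 => rfl
  case e'_5 => rfl
  case e'_8 => rfl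
  have e1 : (fderiv ℝ ζ (t⁻¹ • u)) ((-(t ^ 2)⁻¹) • u)
      = (-(t ^ 2)⁻¹) * (t * (fderiv ℝ ζ (t⁻¹ • u)) (t⁻¹ • u)) := by
    rw [(fderiv ℝ ζ (t⁻¹ • u)).map_smul, (fderiv ℝ ζ (t⁻¹ • u)).map_smul]
    simp only [smul_eq_mul]
    field_simp
  simp only [Function.comp_apply]
  rw [e1]
  have e2 : t ^ d = t ^ (d - 1) * t := by rw [← pow_succ]; congr 1; omega
  have h9 : t ^ (d - 1) ≠ 0 := pow_ne_zero _ htne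
  rw [e2]
  field_simp
  ring

variable {d : ℕ} {ζ : (Fin d → ℝ) → ℝ}

lemma wcont (hζ : ContDiff ℝ (⊤ : ℕ∞) ζ) :
    Continuous (fun s => (d : ℝ) * ζ s + fderiv ℝ ζ s s) := by
  exact (continuous_const.mul hζ.continuous).add
    ((hζ.continuous_fderiv (by simp)).clm_apply continuous_id)

lemma wsupp (hζsupp : tsupport ζ ⊆ closedBall 0 1) {s : Fin d → ℝ}
    (hs : s ∉ closedBall (0 : Fin d → ℝ) 1) : (d : ℝ) * ζ s + fderiv ℝ ζ s s = 0 := by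
  have h1 : s ∉ tsupport ζ := fun h => hs (hζsupp h)
  have h2 : ζ s = 0 := image_eq_zero_of_notMem_tsupport h1
  have h3 : fderiv ℝ ζ s = 0 := by
    by_contra h
    exact h1 (support_fderiv_subset ℝ h)
  simp [h2, h3]

lemma wbdd (hζ : ContDiff ℝ (⊤ : ℕ∞) ζ) (hζsupp : tsupport ζ ⊆ closedBall 0 1) :
    ∃ M : ℝ, 0 ≤ M ∧ ∀ s, |(d : ℝ) * ζ s + fderiv ℝ ζ s s| ≤ M := by
  obtain ⟨C, hC⟩ := (isCompact_closedBall (0 : Fin d → ℝ) 1).exists_bound_of_continuousOn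
    (wcont hζ).continuousOn
  refine ⟨max C 0, le_max_right _ _, fun s => ?_⟩
  by_cases hs : s ∈ closedBall (0 : Fin d → ℝ) 1
  · exact (hC s hs).trans (le_max_left _ _)
  · rw [wsupp hζsupp hs]; simp

lemma scale_nmem {t : ℝ} (ht : 0 < t) {u : Fin d → ℝ} (h : t < ‖u‖) :
    t⁻¹ • u ∉ closedBall (0 : Fin d → ℝ) 1 := by
  simp only [mem_closedBall, dist_zero_right, not_le, norm_smul, norm_inv, Real.norm_eq_abs,
    abs_of_pos ht]
  calc (1 : ℝ) = t⁻¹ * t := by field_simp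
  _ < t⁻¹ * ‖u‖ := by gcongr

lemma hasDeriv_int (hd : 1 ≤ d) (hζ : ContDiff ℝ (⊤ : ℕ∞) ζ)
    (hζsupp : tsupport ζ ⊆ closedBall 0 1)
    (ψ : (Fin d → ℝ) → ℝ) (hψ : Continuous ψ) (x : Fin d → ℝ) {t₀ : ℝ} (ht : 0 < t₀) :
    Integrable (fun y => (-((t₀ ^ d)⁻¹ * t₀⁻¹) *
        ((d : ℝ) * ζ (t₀⁻¹ • (x - y)) + fderiv ℝ ζ (t₀⁻¹ • (x - y)) (t₀⁻¹ • (x - y)))) * ψ y) ∧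
    HasDerivAt (fun t => ∫ y, ((t ^ d)⁻¹ * ζ (t⁻¹ • (x - y))) * ψ y)
      (∫ y, (-((t₀ ^ d)⁻¹ * t₀⁻¹) *
        ((d : ℝ) * ζ (t₀⁻¹ • (x - y)) + fderiv ℝ ζ (t₀⁻¹ • (x - y)) (t₀⁻¹ • (x - y)))) * ψ y) t₀ := by
  set w : (Fin d → ℝ) → ℝ := fun s => (d : ℝ) * ζ s + fderiv ℝ ζ s s with hw
  obtain ⟨Mw, hMw0, hMw⟩ := wbdd hζ hζsupp
  obtain ⟨Mψ, hMψ⟩ := (isCompact_closedBall x (2 * t₀)).exists_bound_of_continuousOn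
    hψ.continuousOn
  have hMψ0 : 0 ≤ Mψ := le_trans (norm_nonneg _) (hMψ x (by simp [mem_closedBall]; positivity))
  set F : ℝ → (Fin d → ℝ) → ℝ := fun t y => ((t ^ d)⁻¹ * ζ (t⁻¹ • (x - y))) * ψ y with hF
  set F' : ℝ → (Fin d → ℝ) → ℝ :=
    fun t y => (-((t ^ d)⁻¹ * t⁻¹) * w (t⁻¹ • (x - y))) * ψ y with hF'
  have hcontF : ∀ t : ℝ, t ≠ 0 → Continuous (F t) := by
    intro t htne
    exact (continuous_const.mul (hζ.continuous.comp
      ((continuous_const.sub continuous_id).const_smul t⁻¹))).mul hψ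
  have hcontF' : ∀ t : ℝ, t ≠ 0 → Continuous (F' t) := by
    intro t htne
    exact (continuous_const.mul ((wcont hζ).comp
      ((continuous_const.sub continuous_id).const_smul t⁻¹))).mul hψ
  have hball : ∀ t ∈ ball t₀ (t₀ / 2), t₀ / 2 < t ∧ t < 2 * t₀ := by
    intro t htb
    rw [mem_ball, Real.dist_eq, abs_sub_lt_iff] at htb
    constructor <;> linarith [htb.1, htb.2]
  -- support control
  have hsuppF' : ∀ t, 0 < t → t < 2 * t₀ → ∀ y, y ∉ closedBall x (2 * t₀) → F' t y = 0 := by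
    intro t ht' ht2 y hy
    have hxy : 2 * t₀ < ‖x - y‖ := by
      rw [mem_closedBall, dist_comm] at hy
      push_neg at hy
      rwa [dist_eq_norm] at hy
    have : w (t⁻¹ • (x - y)) = 0 := wsupp hζsupp (scale_nmem ht' (lt_trans ht2 hxy))
    simp [hF', this]
  have key := hasDerivAt_integral_of_dominated_loc_of_deriv_le (μ := volume)
    (F := F) (F' := F') (x₀ := t₀)
    (bound := (closedBall x (2 * t₀)).indicator
      (fun _ => ((t₀ / 2) ^ d)⁻¹ * (t₀ / 2)⁻¹ * Mw * Mψ))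
    (ball_mem_nhds t₀ (half_pos ht))
    ?_ ?_ ?_ ?_ ?_ ?_
  · exact key
  · filter_upwards [eventually_gt_nhds ht] with t ht'
    exact (hcontF t ht'.ne').aestronglyMeasurable
  · -- integrability of F t₀
    apply (hcontF t₀ ht.ne').integrable_of_hasCompactSupport
    apply HasCompactSupport.intro (isCompact_closedBall x (2 * t₀))
    intro y hy
    have hxy : 2 * t₀ < ‖x - y‖ := by
      rw [mem_closedBall, dist_comm] at hy
      push_neg at hy
      rwa [dist_eq_norm] at hy
    have : ζ (t₀⁻¹ • (x - y)) = 0 :=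
      image_eq_zero_of_notMem_tsupport
        (fun hmem => scale_nmem ht (by linarith) (hζsupp hmem))
    simp [hF, this]
  · exact (hcontF' t₀ ht.ne').aestronglyMeasurable
  · -- bound
    refine Filter.Eventually.of_forall fun y => fun t htb => ?_
    obtain ⟨h1, h2⟩ := hball t htb
    have ht' : (0 : ℝ) < t := lt_trans (by positivity) h1
    by_cases hy : y ∈ closedBall x (2 * t₀)
    · rw [Set.indicator_of_mem hy]
      have e : ‖F' t y‖ = ((t ^ d)⁻¹ * t⁻¹) * |w (t⁻¹ • (x - y))| * |ψ y| := by
        simp only [hF', Real.norm_eq_abs, abs_mul, abs_neg, abs_inv, abs_pow,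
          abs_of_pos ht']
        try ring
      rw [e]
      have hψy : |ψ y| ≤ Mψ := by simpa [Real.norm_eq_abs] using hMψ y hy
      have h3 : (t ^ d)⁻¹ ≤ ((t₀ / 2) ^ d)⁻¹ :=
        inv_anti₀ (by positivity) (pow_le_pow_left₀ (by positivity) h1.le d)
      have h4 : t⁻¹ ≤ (t₀ / 2)⁻¹ := inv_anti₀ (by positivity) h1.le
      have hw0 : (0:ℝ) ≤ |w (t⁻¹ • (x - y))| := abs_nonneg _
      have ht3 : (0:ℝ) ≤ (t ^ d)⁻¹ := by positivity
      have ht4 : (0:ℝ) ≤ t⁻¹ := by positivity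
      have hMwy : |w (t⁻¹ • (x - y))| ≤ Mw := hMw _
      exact mul_le_mul (mul_le_mul (mul_le_mul h3 h4 ht4 (by positivity)) hMwy hw0
        (by positivity)) hψy (abs_nonneg _) (by positivity)
    · rw [Set.indicator_of_notMem hy, hsuppF' t ht' h2 y hy]
      simp
  · exact (integrableOn_const measure_closedBall_lt_top.ne).integrable_indicator measurableSet_closedBall
  · refine Filter.Eventually.of_forall fun y => fun t htb => ?_
    obtain ⟨h1, _⟩ := hball t htb
    have ht' : (0 : ℝ) < t := lt_trans (by positivity) h1
    exact (kderiv d hd ζ hζ (x - y) ht').mul_const (ψ y)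

lemma deriv_bound (hd : 1 ≤ d) (hζ : ContDiff ℝ (⊤ : ℕ∞) ζ)
    (hζsupp : tsupport ζ ⊆ closedBall 0 1) (hζint : (∫ x, ζ x) = 1)
    (φ : (Fin d → ℝ) → ℝ) (K : NNReal) (hφ : LipschitzWith K φ)
    (x : Fin d → ℝ) {t : ℝ} (ht : 0 < t) (D : ℝ)
    (hD : HasDerivAt (fun τ => ∫ y, ((τ ^ d)⁻¹ * ζ (τ⁻¹ • (x - y))) * φ y) D t) :
    |D| ≤ (∫ s, |(d : ℝ) * ζ s + fderiv ℝ ζ s s| * ‖s‖) * K := by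
  have hφc : Continuous φ := hφ.continuous
  obtain ⟨hint, hder⟩ := hasDeriv_int hd hζ hζsupp φ hφc x ht
  have hDeq : D = ∫ y, (-((t ^ d)⁻¹ * t⁻¹) *
      ((d : ℝ) * ζ (t⁻¹ • (x - y)) + fderiv ℝ ζ (t⁻¹ • (x - y)) (t⁻¹ • (x - y)))) * φ y :=
    hD.unique hder
  -- abbreviations
  set w : (Fin d → ℝ) → ℝ := fun s => (d : ℝ) * ζ s + fderiv ℝ ζ s s with hw
  set A : (Fin d → ℝ) → ℝ := fun y => -((t ^ d)⁻¹ * t⁻¹) * w (t⁻¹ • (x - y)) with hA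
  -- the one-function version and the vanishing of ∫ A
  obtain ⟨hint1, hder1⟩ := hasDeriv_int hd hζ hζsupp (fun _ => 1) continuous_const x ht
  have hAint : Integrable A := by simpa only [hA, hw, mul_one] using hint1
  have hG1 : (fun τ => ∫ y, ((τ ^ d)⁻¹ * ζ (τ⁻¹ • (x - y))) * (fun _ : Fin d → ℝ => (1:ℝ)) y)
      =ᶠ[nhds t] fun _ => (1 : ℝ) := by
    filter_upwards [eventually_gt_nhds ht] with τ hτ
    simp only [mul_one]
    rw [integral_const_mul, cov ζ x hτ, hζint]
    field_simp
  have hD1 : HasDerivAt (fun _ : ℝ => (1:ℝ))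
      (∫ y, (-((t ^ d)⁻¹ * t⁻¹) * w (t⁻¹ • (x - y))) * (fun _ : Fin d → ℝ => (1:ℝ)) y) t :=
    hder1.congr_of_eventuallyEq hG1.symm
  have hAzero : (∫ y, A y) = 0 := by
    have := (hasDerivAt_const t (1:ℝ)).unique hD1
    simpa [hA] using this.symm
  -- rewrite D using the vanishing integral
  have hAφx : (∫ y, A y * φ x) = 0 := by rw [integral_mul_const, hAzero, zero_mul]
  have hDeq2 : D = ∫ y, A y * (φ y - φ x) := by
    rw [hDeq]
    have h1 : (∫ y, A y * (φ y - φ x)) = (∫ y, A y * φ y) - ∫ y, A y * φ x := by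
      rw [← integral_sub hint (hAint.mul_const (φ x))]
      congr 1; ext y; ring
    rw [h1, hAφx, sub_zero]
  -- dominating function
  set c0 : ℝ := (t ^ d)⁻¹ * t⁻¹ with hc0
  have hc0pos : 0 < c0 := by positivity
  set g : (Fin d → ℝ) → ℝ := fun s => |w s| * (t * ‖s‖) with hg
  have hgval : ∀ y, g (t⁻¹ • (x - y)) = |w (t⁻¹ • (x - y))| * ‖x - y‖ := by
    intro y
    simp only [hg, norm_smul, norm_inv, Real.norm_eq_abs, abs_of_pos ht]
    field_simp
  set bound : (Fin d → ℝ) → ℝ := fun y => (c0 * K) * g (t⁻¹ • (x - y)) with hbound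
  have hbc : Continuous bound := by
    apply continuous_const.mul
    exact ((wcont hζ).abs.mul (continuous_const.mul continuous_norm)).comp
      ((continuous_const.sub continuous_id).const_smul t⁻¹)
  have hbsupp : HasCompactSupport bound := by
    apply HasCompactSupport.intro (isCompact_closedBall x (2 * t))
    intro y hy
    have hxy : 2 * t < ‖x - y‖ := by
      rw [mem_closedBall, dist_comm] at hy
      push_neg at hy
      rwa [dist_eq_norm] at hy
    have hwz : w (t⁻¹ • (x - y)) = 0 := wsupp hζsupp (scale_nmem ht (by linarith))
    simp [hbound, hg, hwz]
  have hbint : Integrable bound := hbc.integrable_of_hasCompactSupport hbsupp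
  have hle : ∀ y, ‖A y * (φ y - φ x)‖ ≤ bound y := by
    intro y
    simp only [hbound]
    rw [hgval y]
    have h1 : ‖A y * (φ y - φ x)‖ = (c0 * |w (t⁻¹ • (x - y))|) * |φ y - φ x| := by
      simp only [hA]
      simp only [Real.norm_eq_abs, abs_mul, abs_neg]
      rw [abs_of_pos hc0pos]
      try ring
    rw [h1]
    have h2 : |φ y - φ x| ≤ K * ‖x - y‖ := by
      have := hφ.dist_le_mul y x
      rw [Real.dist_eq, dist_eq_norm, norm_sub_rev] at this
      exact this
    calc (c0 * |w (t⁻¹ • (x - y))|) * |φ y - φ x|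
        ≤ (c0 * |w (t⁻¹ • (x - y))|) * (K * ‖x - y‖) := by
          apply mul_le_mul_of_nonneg_left h2 (by positivity)
      _ = c0 * ↑K * (|w (t⁻¹ • (x - y))| * ‖x - y‖) := by ring
  have hnormD : |D| ≤ ∫ y, bound y := by
    rw [hDeq2]
    exact norm_integral_le_of_norm_le hbint (Filter.Eventually.of_forall hle)
  -- compute the bound integral
  have hcomp : (∫ y, bound y) = (∫ s, |w s| * ‖s‖) * K := by
    simp only [hbound]
    rw [integral_const_mul, cov g x ht]
    have : (∫ s, g s) = t * ∫ s, |w s| * ‖s‖ := by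
      rw [← integral_const_mul]
      congr 1; ext s; rw [hg]; ring
    rw [this]
    have ht2 : c0 * (t ^ d * t) = 1 := by
      simp only [hc0]; field_simp
    calc c0 * ↑K * (t ^ d * (t * ∫ s, |w s| * ‖s‖))
        = (c0 * (t ^ d * t)) * ↑K * ∫ s, |w s| * ‖s‖ := by ring
      _ = (∫ s, |w s| * ‖s‖) * K := by rw [ht2]; ring
  rw [← hcomp]
  exact hnormD


/-- The Maz'ya–Shaposhnikova extension `𝒯φ` of a `K`-Lipschitz function `φ : ℝⁿ⁻¹ → ℝ`
is smooth on the open upper half-space and its vertical derivative satisfies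
`|∂ₙ(𝒯φ)| ≤ c K` with `c = ∫ |(n−1)ζ(s) + s·∇ζ(s)|·|s| ds` depending only on `n`, `ζ`. -/
theorem stmt13 (n : ℕ) (hn : 2 ≤ n)
    (ζ : (Fin (n - 1) → ℝ) → ℝ) (hζsm : ContDiff ℝ (⊤ : ℕ∞) ζ)
    (hζsupp : tsupport ζ ⊆ Metric.closedBall 0 1)
    (hζpos : ∀ x, 0 ≤ ζ x) (hζint : (∫ x, ζ x) = 1)
    (φ : (Fin (n - 1) → ℝ) → ℝ) (K : NNReal) (hφ : LipschitzWith K φ)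
    (T : ((Fin (n - 1) → ℝ) × ℝ) → ℝ)
    (hT : ∀ p : (Fin (n - 1) → ℝ) × ℝ, 0 < p.2 →
      T p = ∫ y', ((p.2 ^ (n - 1))⁻¹ * ζ ((p.2)⁻¹ • (p.1 - y'))) * φ y') :
    ContDiffOn ℝ (⊤ : ℕ∞) T {p : (Fin (n - 1) → ℝ) × ℝ | 0 < p.2} ∧
    (∀ p : (Fin (n - 1) → ℝ) × ℝ, 0 < p.2 →
      |fderiv ℝ T p (0, 1)| ≤
        (∫ s, |((n : ℝ) - 1) * ζ s + fderiv ℝ ζ s s| * ‖s‖) * K) := by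
  have hd : 1 ≤ n - 1 := by omega
  have hφc : Continuous φ := hφ.continuous
  have hOpen : IsOpen {p : (Fin (n - 1) → ℝ) × ℝ | 0 < p.2} :=
    isOpen_lt continuous_const continuous_snd
  -- smoothness at every point of the half-space
  have smooth : ∀ p : (Fin (n - 1) → ℝ) × ℝ, 0 < p.2 → ContDiffAt ℝ (⊤ : ℕ∞) T p := by
    intro p hp
    set b : ℝ := p.2 + 1 with hb
    have hbpos : 0 < b := by positivity
    set g : ℝ → (Fin (n - 1) → ℝ) → ℝ := fun t u => (t ^ (n - 1))⁻¹ * ζ (t⁻¹ • u) with hg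
    have hgs : ∀ t u, t ∈ Set.Ioo (0 : ℝ) b → u ∉ Metric.closedBall (0 : Fin (n-1) → ℝ) b →
        g t u = 0 := by
      intro t u htm hu
      have hub : b < ‖u‖ := by
        rw [Metric.mem_closedBall, dist_zero_right] at hu
        push_neg at hu; exact hu
      have : ζ (t⁻¹ • u) = 0 :=
        image_eq_zero_of_notMem_tsupport fun hmem =>
          scale_nmem htm.1 (lt_trans htm.2 hub) (hζsupp hmem)
      simp [hg, this]
    have hgsm : ContDiffOn ℝ (⊤ : ℕ∞) (Function.uncurry g)
        (Set.Ioo (0 : ℝ) b ×ˢ Set.univ) := by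
      apply ContDiffOn.mul
      · apply ContDiffOn.inv
        · exact (contDiff_fst.pow _).contDiffOn
        · rintro ⟨t, u⟩ ⟨ht1, -⟩
          exact pow_ne_zero _ (ne_of_gt ht1.1)
      · apply hζsm.comp_contDiffOn
        exact ((contDiff_fst.contDiffOn.inv (fun q hq => ne_of_gt hq.1.1))).smul
          contDiff_snd.contDiffOn
    have conv := contDiffOn_convolution_right_with_param (μ := volume)
      (ContinuousLinearMap.mul ℝ ℝ) isOpen_Ioo
      (isCompact_closedBall (0 : Fin (n-1) → ℝ) b) hgs hφc.locallyIntegrable hgsm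
    have hmem : ((p.2, p.1) : ℝ × (Fin (n-1) → ℝ)) ∈ Set.Ioo (0 : ℝ) b ×ˢ Set.univ :=
      ⟨⟨hp, by rw [hb]; linarith⟩, trivial⟩
    have cAt := conv.contDiffAt ((isOpen_Ioo.prod isOpen_univ).mem_nhds hmem)
    have swAt : ContDiffAt ℝ (⊤ : ℕ∞) (fun q : (Fin (n-1) → ℝ) × ℝ => (q.2, q.1)) p :=
      (contDiff_snd.prodMk contDiff_fst).contDiffAt
    have comp := cAt.comp p swAt
    apply comp.congr_of_eventuallyEq
    filter_upwards [hOpen.mem_nhds hp] with q hq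
    rw [hT q hq]
    show _ = convolution φ (g q.2) (ContinuousLinearMap.mul ℝ ℝ) volume q.1
    rw [convolution_def]
    simp only [ContinuousLinearMap.mul_apply', hg]
    exact integral_congr_ae (Filter.Eventually.of_forall fun y => (mul_comm _ _))
  refine ⟨fun p hp => (smooth p hp).contDiffWithinAt, ?_⟩
  rintro ⟨x, t⟩ hp
  have ht : 0 < t := hp
  -- the vertical derivative
  have hdiffT : DifferentiableAt ℝ T (x, t) :=
    (smooth (x, t) hp).differentiableAt (by simp)
  have hc : HasDerivAt (fun τ : ℝ => ((x : Fin (n-1) → ℝ), τ))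
      ((0 : Fin (n-1) → ℝ), (1 : ℝ)) t := (hasDerivAt_const t x).prodMk (hasDerivAt_id t)
  have hTd : HasDerivAt (fun τ => T (x, τ)) (fderiv ℝ T (x, t) (0, 1)) t :=
    hdiffT.hasFDerivAt.comp_hasDerivAt t hc
  have hev : (fun τ => ∫ y, ((τ ^ (n - 1))⁻¹ * ζ (τ⁻¹ • (x - y))) * φ y)
      =ᶠ[nhds t] fun τ => T (x, τ) := by
    filter_upwards [eventually_gt_nhds ht] with τ hτ
    exact (hT (x, τ) hτ).symm
  have hD : HasDerivAt (fun τ => ∫ y, ((τ ^ (n - 1))⁻¹ * ζ (τ⁻¹ • (x - y))) * φ y)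
      (fderiv ℝ T (x, t) (0, 1)) t := hTd.congr_of_eventuallyEq hev
  have hbd := deriv_bound hd hζsm hζsupp hζint φ K hφ x ht _ hD
  have hcast : ((n - 1 : ℕ) : ℝ) = (n : ℝ) - 1 := by
    have : (1 : ℕ) ≤ n := by omega
    push_cast [Nat.cast_sub this]
    ring
  rw [← hcast]
  exact hbd
end

section
/- Let φ : ℝⁿ⁻¹ → ℝ be Lipschitz with constant K, let c ≥ 1 satisfy |∂_{zₙ}(𝒯φ)| ≤ cK on ℍ, and let N > cK. Then the map Φ(z', zₙ) := (z', N zₙ + (𝒯φ)(z', zₙ)) is a bijection from the open upper half-space ℍ onto the open epigraph Ω := {(x', xₙ) ∈ ℝⁿ⁻¹ × ℝ : xₙ > φ(x')}. -/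
open MeasureTheory

set_option maxHeartbeats 2000000 in
/-- If `φ : ℝⁿ⁻¹ → ℝ` is `K`-Lipschitz, `c ≥ 1` satisfies `|∂ₙ(𝒯φ)| ≤ cK` on the open
half-space and `N > cK`, then `Φ(z', zₙ) = (z', N zₙ + (𝒯φ)(z', zₙ))` is a bijection
from the open upper half-space onto the open epigraph `{(x', xₙ) : xₙ > φ(x')}`. -/
theorem stmt15 (n : ℕ) (hn : 2 ≤ n)
    (ζ : (Fin (n - 1) → ℝ) → ℝ) (hζsm : ContDiff ℝ (⊤ : ℕ∞) ζ)
    (hζsupp : tsupport ζ ⊆ Metric.closedBall 0 1)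
    (hζpos : ∀ x, 0 ≤ ζ x) (hζint : (∫ x, ζ x) = 1)
    (φ : (Fin (n - 1) → ℝ) → ℝ) (K : NNReal) (hφ : LipschitzWith K φ)
    (T : ((Fin (n - 1) → ℝ) × ℝ) → ℝ)
    (hT : ∀ p : (Fin (n - 1) → ℝ) × ℝ, 0 < p.2 →
      T p = ∫ y', ((p.2 ^ (n - 1))⁻¹ * ζ ((p.2)⁻¹ • (p.1 - y'))) * φ y')
    (c : ℝ) (hc : 1 ≤ c)
    (hder : ∀ p : (Fin (n - 1) → ℝ) × ℝ, 0 < p.2 → |fderiv ℝ T p (0, 1)| ≤ c * K)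
    (N : ℝ) (hN : c * K < N) :
    Set.BijOn (fun p : (Fin (n - 1) → ℝ) × ℝ => (p.1, N * p.2 + T p))
      {p : (Fin (n - 1) → ℝ) × ℝ | 0 < p.2}
      {p : (Fin (n - 1) → ℝ) × ℝ | φ p.1 < p.2} := by
  have hK0 : (0:ℝ) ≤ K := K.coe_nonneg
  have hKcK : (K:ℝ) ≤ c * K := by nlinarith
  have hKN : (K:ℝ) < N := lt_of_le_of_lt hKcK hN
  have hφc : Continuous φ := hφ.continuous
  have hζc : Continuous ζ := hζsm.continuous
  -- ζ vanishes outside the unit ball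
  have hζ0 : ∀ x : Fin (n - 1) → ℝ, 1 < ‖x‖ → ζ x = 0 := by
    intro x hx
    apply image_eq_zero_of_notMem_tsupport
    intro hmem
    have h := hζsupp hmem
    rw [Metric.mem_closedBall, dist_zero_right] at h
    linarith
  -- the rescaled kernel vanishes outside the ball of radius t
  have hsupp : ∀ (z : Fin (n - 1) → ℝ) (t : ℝ), 0 < t → ∀ y : Fin (n - 1) → ℝ,
      t < ‖z - y‖ → ζ (t⁻¹ • (z - y)) = 0 := by
    intro z t ht y hy
    apply hζ0
    rw [norm_smul, norm_inv, Real.norm_eq_abs, abs_of_pos ht]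
    have h1 : (1:ℝ) = t⁻¹ * t := (inv_mul_cancel₀ ht.ne').symm
    rw [h1]
    exact mul_lt_mul_of_pos_left hy (inv_pos.2 ht)
  -- integrability of kernel times a continuous function
  have hint : ∀ (g : (Fin (n - 1) → ℝ) → ℝ), Continuous g → ∀ (z : Fin (n - 1) → ℝ) (t : ℝ),
      0 < t → Integrable (fun y => ((t ^ (n - 1))⁻¹ * ζ (t⁻¹ • (z - y))) * g y) := by
    intro g hg z t ht
    apply Continuous.integrable_of_hasCompactSupport
    · exact (continuous_const.mul (hζc.comp ((continuous_const.sub continuous_id).const_smul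
        t⁻¹))).mul hg
    · apply HasCompactSupport.intro (isCompact_closedBall z t)
      intro y hy
      have hdy : t < ‖z - y‖ := by
        rw [Metric.mem_closedBall, not_le, dist_comm, dist_eq_norm] at hy
        exact hy
      rw [hsupp z t ht y hdy, mul_zero, zero_mul]
  -- normalization : the kernel integrates to 1
  have hfrank : Module.finrank ℝ (Fin (n - 1) → ℝ) = n - 1 := by
    simp [Module.finrank_pi]
  have hone : ∀ (z : Fin (n - 1) → ℝ) (t : ℝ), 0 < t →
      (∫ y, (t ^ (n - 1))⁻¹ * ζ (t⁻¹ • (z - y))) = 1 := by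
    intro z t ht
    rw [integral_const_mul]
    have h1 : (∫ y, ζ (t⁻¹ • (z - y))) = ∫ x, ζ (t⁻¹ • x) :=
      integral_sub_left_eq_self (fun x => ζ (t⁻¹ • x)) volume z
    rw [h1, MeasureTheory.Measure.integral_comp_inv_smul_of_nonneg volume ζ ht.le, hζint,
      hfrank, smul_eq_mul, mul_one]
    exact inv_mul_cancel₀ (pow_ne_zero _ ht.ne')
  -- the basic closeness estimate |T(z,t) - φ z| ≤ K t
  have hA : ∀ (z : Fin (n - 1) → ℝ) (t : ℝ), 0 < t → |T (z, t) - φ z| ≤ K * t := by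
    intro z t ht
    have i1 := hint φ hφc z t ht
    have i2 := hint (fun _ => φ z) continuous_const z t ht
    have e2 : (∫ y, ((t ^ (n - 1))⁻¹ * ζ (t⁻¹ • (z - y))) * φ z) = φ z := by
      rw [integral_mul_const, hone z t ht, one_mul]
    have e1 : T (z, t) - φ z
        = ∫ y, ((t ^ (n - 1))⁻¹ * ζ (t⁻¹ • (z - y))) * (φ y - φ z) := by
      have e4 : (∫ y, ((t ^ (n - 1))⁻¹ * ζ (t⁻¹ • (z - y))) * (φ y - φ z))
          = (∫ y, ((t ^ (n - 1))⁻¹ * ζ (t⁻¹ • (z - y))) * φ y)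
            - ∫ y, ((t ^ (n - 1))⁻¹ * ζ (t⁻¹ • (z - y))) * φ z := by
        rw [← integral_sub i1 i2]
        congr 1
        ext y
        ring
      rw [e4, e2, hT (z, t) ht]
    have i3 := hint (fun _ => (K : ℝ) * t) continuous_const z t ht
    have hb : ∀ y, ‖((t ^ (n - 1))⁻¹ * ζ (t⁻¹ • (z - y))) * (φ y - φ z)‖
        ≤ ((t ^ (n - 1))⁻¹ * ζ (t⁻¹ • (z - y))) * ((K : ℝ) * t) := by
      intro y
      by_cases hy : ‖z - y‖ ≤ t
      · have hc0 : 0 ≤ (t ^ (n - 1))⁻¹ * ζ (t⁻¹ • (z - y)) :=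
          mul_nonneg (by positivity) (hζpos _)
        rw [Real.norm_eq_abs, abs_mul, abs_of_nonneg hc0]
        apply mul_le_mul_of_nonneg_left _ hc0
        have hlip : |φ y - φ z| ≤ (K : ℝ) * ‖y - z‖ := by
          have := hφ.dist_le_mul y z
          rwa [Real.dist_eq, dist_eq_norm] at this
        have : ‖y - z‖ ≤ t := by rwa [norm_sub_rev] at hy
        nlinarith [abs_nonneg (φ y - φ z), norm_nonneg (y - z)]
      · rw [hsupp z t ht y (not_le.1 hy), mul_zero, zero_mul, zero_mul, norm_zero]
    have e3 : (∫ y, ((t ^ (n - 1))⁻¹ * ζ (t⁻¹ • (z - y))) * ((K : ℝ) * t)) = (K : ℝ) * t := by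
      rw [integral_mul_const, hone z t ht, one_mul]
    calc |T (z, t) - φ z| = ‖∫ y, ((t ^ (n - 1))⁻¹ * ζ (t⁻¹ • (z - y))) * (φ y - φ z)‖ := by
          rw [e1, Real.norm_eq_abs]
      _ ≤ ∫ y, ((t ^ (n - 1))⁻¹ * ζ (t⁻¹ • (z - y))) * ((K : ℝ) * t) :=
          norm_integral_le_of_norm_le i3 (Filter.Eventually.of_forall hb)
      _ = (K : ℝ) * t := e3
  -- differentiability of T on the half space
  have hDiff : ∀ p : (Fin (n - 1) → ℝ) × ℝ, 0 < p.2 → DifferentiableAt ℝ T p := by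
    intro p₀ hp₀
    obtain ⟨z₀, t₀⟩ := p₀
    have ht₀ : 0 < t₀ := hp₀
    -- the kernel as a jointly smooth function
    set Ψ : (((Fin (n - 1) → ℝ) × ℝ) × (Fin (n - 1) → ℝ)) → ℝ :=
      fun q => (q.1.2 ^ (n - 1))⁻¹ * ζ (q.1.2⁻¹ • (q.1.1 - q.2)) with hΨdef
    set U : Set ((((Fin (n - 1) → ℝ) × ℝ) × (Fin (n - 1) → ℝ))) := {q | 0 < q.1.2} with hUdef
    have hUopen : IsOpen U := isOpen_lt continuous_const (continuous_snd.comp continuous_fst)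
    have hΨcd : ContDiffOn ℝ 1 Ψ U := by
      apply ContDiffOn.mul
      · apply ContDiffOn.inv
        · exact (ContDiff.pow (contDiff_snd.comp contDiff_fst) _).contDiffOn
        · intro q hq
          exact pow_ne_zero _ (ne_of_gt hq)
      · apply ContDiff.comp_contDiffOn (hζsm.of_le (mod_cast le_top))
        apply ContDiffOn.smul (f := fun q : ((Fin (n - 1) → ℝ) × ℝ) × (Fin (n - 1) → ℝ) => q.1.2⁻¹)
          (g := fun q : ((Fin (n - 1) → ℝ) × ℝ) × (Fin (n - 1) → ℝ) => q.1.1 - q.2)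
        · exact ((contDiff_snd.comp contDiff_fst).contDiffOn).inv (fun q hq => ne_of_gt hq)
        · exact ((contDiff_fst.comp contDiff_fst).sub contDiff_snd).contDiffOn
    have hfds : ContinuousOn (fun q => fderiv ℝ Ψ q) U :=
      hΨcd.continuousOn_fderiv_of_isOpen hUopen le_rfl
    have hΨdiff : ∀ q ∈ U, HasFDerivAt Ψ (fderiv ℝ Ψ q) q := by
      intro q hq
      exact ((hΨcd.differentiableOn one_ne_zero).differentiableAt (hUopen.mem_nhds hq)).hasFDerivAt
    -- the compact set on which we bound the derivative of the kernel
    set Kc : Set ((((Fin (n - 1) → ℝ) × ℝ) × (Fin (n - 1) → ℝ))) :=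
      (Metric.closedBall ((z₀, t₀) : (Fin (n - 1) → ℝ) × ℝ) (t₀ / 2))
        ×ˢ (Metric.closedBall z₀ (2 * t₀)) with hKcdef
    have hKcU : Kc ⊆ U := by
      rintro ⟨p, y⟩ ⟨hp, -⟩
      simp only [Metric.mem_closedBall] at hp
      have h2 : dist p.2 t₀ ≤ t₀ / 2 := by
        rw [Prod.dist_eq] at hp
        exact le_trans (le_max_right _ _) hp
      rw [Real.dist_eq] at h2
      have := abs_le.1 h2
      show 0 < p.2
      linarith [this.1]
    have hKccpt : IsCompact Kc := (isCompact_closedBall _ _).prod (isCompact_closedBall _ _)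
    obtain ⟨C₀, hC₀⟩ := hKccpt.exists_bound_of_continuousOn (hfds.mono hKcU)
    set C : ℝ := max C₀ 0 with hCdef
    have hC0 : 0 ≤ C := le_max_right _ _
    have hC : ∀ q ∈ Kc, ‖fderiv ℝ Ψ q‖ ≤ C := fun q hq => le_trans (hC₀ q hq) (le_max_left _ _)
    -- the integrand and its derivative
    set F : ((Fin (n - 1) → ℝ) × ℝ) → (Fin (n - 1) → ℝ) → ℝ :=
      fun p y => Ψ (p, y) * φ y with hFdef
    set F' : (Fin (n - 1) → ℝ) → ((Fin (n - 1) → ℝ) × ℝ) →L[ℝ] ℝ :=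
      fun y => φ y • ((fderiv ℝ Ψ ((z₀, t₀), y)).comp
        (ContinuousLinearMap.inl ℝ ((Fin (n - 1) → ℝ) × ℝ) (Fin (n - 1) → ℝ))) with hF'def
    set bound : (Fin (n - 1) → ℝ) → ℝ :=
      (Metric.closedBall z₀ (2 * t₀)).indicator (fun y => C * |φ y|) with hbdef
    -- pointwise differentiability of the integrand in the parameter
    have hpoint : ∀ (p : (Fin (n - 1) → ℝ) × ℝ), 0 < p.2 → ∀ y,
        HasFDerivAt (fun p' => F p' y)
          (φ y • ((fderiv ℝ Ψ (p, y)).comp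
            (ContinuousLinearMap.inl ℝ ((Fin (n - 1) → ℝ) × ℝ) (Fin (n - 1) → ℝ)))) p := by
      intro p hp y
      have hq : ((p, y) : (((Fin (n - 1) → ℝ) × ℝ) × (Fin (n - 1) → ℝ))) ∈ U := hp
      have h1 := hΨdiff _ hq
      have h2 : HasFDerivAt (fun p' : (Fin (n - 1) → ℝ) × ℝ => ((p', y) :
          (((Fin (n - 1) → ℝ) × ℝ) × (Fin (n - 1) → ℝ))))
          (ContinuousLinearMap.inl ℝ ((Fin (n - 1) → ℝ) × ℝ) (Fin (n - 1) → ℝ)) p :=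
        hasFDerivAt_prodMk_left p y
      exact (h1.comp p h2).mul_const (φ y)
    -- derivative bound on the small ball
    have hballKc : ∀ p ∈ Metric.ball ((z₀, t₀) : (Fin (n - 1) → ℝ) × ℝ) (t₀ / 2),
        ∀ y ∈ Metric.closedBall z₀ (2 * t₀),
        ((p, y) : (((Fin (n - 1) → ℝ) × ℝ) × (Fin (n - 1) → ℝ))) ∈ Kc := by
      intro p hp y hy
      exact ⟨Metric.ball_subset_closedBall hp, hy⟩
    have hballpos : ∀ p ∈ Metric.ball ((z₀, t₀) : (Fin (n - 1) → ℝ) × ℝ) (t₀ / 2), 0 < p.2 := by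
      intro p hp
      rw [Metric.mem_ball, Prod.dist_eq] at hp
      have h2 : dist p.2 t₀ < t₀ / 2 := lt_of_le_of_lt (le_max_right _ _) hp
      rw [Real.dist_eq] at h2
      have := abs_lt.1 h2
      linarith [this.1]
    have hballp2 : ∀ p ∈ Metric.ball ((z₀, t₀) : (Fin (n - 1) → ℝ) × ℝ) (t₀ / 2),
        p.2 < 3 * t₀ / 2 := by
      intro p hp
      rw [Metric.mem_ball, Prod.dist_eq] at hp
      have h2 : dist p.2 t₀ < t₀ / 2 := lt_of_le_of_lt (le_max_right _ _) hp
      rw [Real.dist_eq] at h2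
      have := abs_lt.1 h2
      linarith [this.2]
    -- norm bound for the partial derivatives
    have hnormb : ∀ (p : (Fin (n - 1) → ℝ) × ℝ) (y : Fin (n - 1) → ℝ),
        ((p, y) : (((Fin (n - 1) → ℝ) × ℝ) × (Fin (n - 1) → ℝ))) ∈ Kc →
        ‖φ y • ((fderiv ℝ Ψ (p, y)).comp
          (ContinuousLinearMap.inl ℝ ((Fin (n - 1) → ℝ) × ℝ) (Fin (n - 1) → ℝ)))‖
          ≤ C * |φ y| := by
      intro p y hq
      have hD := hC _ hq
      have h5 : (0:ℝ) ≤ |φ y| := abs_nonneg _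
      apply ContinuousLinearMap.opNorm_le_bound _ (mul_nonneg hC0 h5)
      intro v
      rw [ContinuousLinearMap.smul_apply, ContinuousLinearMap.comp_apply,
        ContinuousLinearMap.inl_apply]
      have h1 : ‖fderiv ℝ Ψ (p, y) ((v, 0) :
          (((Fin (n - 1) → ℝ) × ℝ) × (Fin (n - 1) → ℝ)))‖ ≤ ‖fderiv ℝ Ψ (p, y)‖ * ‖v‖ := by
        have h2 := (fderiv ℝ Ψ (p, y)).le_opNorm ((v, (0 : Fin (n - 1) → ℝ)))
        have h3 : ‖((v, (0 : Fin (n - 1) → ℝ)) :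
            (((Fin (n - 1) → ℝ) × ℝ) × (Fin (n - 1) → ℝ)))‖ = ‖v‖ := by
          rw [Prod.norm_def]
          simp
        rw [h3] at h2
        exact h2
      have h4 : ‖φ y • fderiv ℝ Ψ (p, y) ((v, 0) :
          (((Fin (n - 1) → ℝ) × ℝ) × (Fin (n - 1) → ℝ)))‖
          = |φ y| * ‖fderiv ℝ Ψ (p, y) ((v, 0) :
            (((Fin (n - 1) → ℝ) × ℝ) × (Fin (n - 1) → ℝ)))‖ := by
        simp only [smul_eq_mul, Real.norm_eq_abs, abs_mul]
      rw [h4]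
      calc |φ y| * ‖fderiv ℝ Ψ (p, y) ((v, 0) :
            (((Fin (n - 1) → ℝ) × ℝ) × (Fin (n - 1) → ℝ)))‖
          ≤ |φ y| * (‖fderiv ℝ Ψ (p, y)‖ * ‖v‖) := mul_le_mul_of_nonneg_left h1 h5
        _ ≤ |φ y| * (C * ‖v‖) :=
            mul_le_mul_of_nonneg_left (mul_le_mul_of_nonneg_right hD (norm_nonneg v)) h5
        _ = C * |φ y| * ‖v‖ := by ring
    -- the main differentiation under the integral
    have hmain : HasFDerivAt (fun p => ∫ y, F p y) (∫ y, F' y) ((z₀, t₀) :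
        (Fin (n - 1) → ℝ) × ℝ) := by
      refine (hasFDerivAt_integral_of_dominated_loc_of_lip (s := Metric.ball ((z₀, t₀) : (Fin (n - 1) → ℝ) × ℝ) (t₀ / 2))
        (bound := bound) (Metric.ball_mem_nhds _ (by positivity)) ?_ ?_ ?_ ?_ ?_ ?_).2
      · apply Filter.Eventually.of_forall
        intro p
        apply Continuous.aestronglyMeasurable
        show Continuous fun y => ((p.2 ^ (n - 1))⁻¹ * ζ (p.2⁻¹ • (p.1 - y))) * φ y
        exact (continuous_const.mul (hζc.comp ((continuous_const.sub
          continuous_id).const_smul p.2⁻¹))).mul hφc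
      · exact hint φ hφc z₀ t₀ ht₀
      · apply Continuous.aestronglyMeasurable
        apply Continuous.smul hφc
        apply Continuous.clm_comp _ continuous_const
        apply hfds.comp_continuous (continuous_const.prodMk continuous_id)
        intro y
        exact ht₀
      · apply Filter.Eventually.of_forall
        intro y
        by_cases hy : y ∈ Metric.closedBall z₀ (2 * t₀)
        · have hby : bound y = C * |φ y| := Set.indicator_of_mem hy _
          apply Convex.lipschitzOnWith_of_nnnorm_hasFDerivWithin_le
            (f' := fun p => φ y • ((fderiv ℝ Ψ (p, y)).comp
              (ContinuousLinearMap.inl ℝ ((Fin (n - 1) → ℝ) × ℝ) (Fin (n - 1) → ℝ))))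
            ?_ ?_ (convex_ball _ _)
          · intro p hp
            exact (hpoint p (hballpos p hp) y).hasFDerivWithinAt
          · intro p hp
            have hb := hnormb p y (hballKc p hp y hy)
            rw [← NNReal.coe_le_coe, coe_nnnorm, Real.coe_nnabs, hby]
            rw [abs_of_nonneg (mul_nonneg hC0 (abs_nonneg _))]
            exact hb
        · have hbz : bound y = 0 := Set.indicator_of_notMem hy _
          have hFz : ∀ p ∈ Metric.ball ((z₀, t₀) : (Fin (n - 1) → ℝ) × ℝ) (t₀ / 2),
              F p y = 0 := by
            intro p hp
            have hp2 : 0 < p.2 := hballpos p hp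
            have hp2' : p.2 < 3 * t₀ / 2 := hballp2 p hp
            have hp1 : dist p.1 z₀ < t₀ / 2 := by
              rw [Metric.mem_ball, Prod.dist_eq] at hp
              exact lt_of_le_of_lt (le_max_left _ _) hp
            have hyz : 2 * t₀ < dist y z₀ := by
              rw [Metric.mem_closedBall, not_le] at hy
              exact hy
            have hby : p.2 < ‖p.1 - y‖ := by
              have htr : dist y z₀ ≤ dist y p.1 + dist p.1 z₀ := dist_triangle _ _ _
              have : dist y p.1 = ‖p.1 - y‖ := by rw [dist_comm, dist_eq_norm]
              linarith
            show Ψ (p, y) * φ y = 0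
            show ((p.2 ^ (n - 1))⁻¹ * ζ (p.2⁻¹ • (p.1 - y))) * φ y = 0
            rw [hsupp p.1 p.2 hp2 y hby, mul_zero, zero_mul]
          rw [hbz]
          rw [lipschitzOnWith_iff_dist_le_mul]
          intro p hp q hq
          rw [hFz p hp, hFz q hq]
          simp
      · exact ((continuous_const.mul hφc.abs).continuousOn.integrableOn_compact
          (isCompact_closedBall _ _)).integrable_indicator measurableSet_closedBall
      · apply Filter.Eventually.of_forall
        intro y
        exact hpoint (z₀, t₀) ht₀ y
    -- transfer to `T`
    have hopen : IsOpen {p : (Fin (n - 1) → ℝ) × ℝ | 0 < p.2} :=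
      isOpen_lt continuous_const continuous_snd
    have heq : T =ᶠ[nhds ((z₀, t₀) : (Fin (n - 1) → ℝ) × ℝ)] (fun p => ∫ y, F p y) := by
      filter_upwards [hopen.mem_nhds ht₀] with p hp
      exact hT p hp
    exact (hmain.congr_of_eventuallyEq heq).differentiableAt

  -- the vertical sections have a derivative
  have hHD : ∀ (z : Fin (n - 1) → ℝ) (t : ℝ), 0 < t →
      HasDerivAt (fun s => N * s + T (z, s)) (N + fderiv ℝ T (z, t) (0, 1)) t := by
    intro z t ht
    have h1 : HasFDerivAt T (fderiv ℝ T (z, t)) (z, t) := (hDiff (z, t) ht).hasFDerivAt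
    have h2 : HasDerivAt (fun s : ℝ => ((z, s) : (Fin (n - 1) → ℝ) × ℝ)) (0, 1) t :=
      (hasDerivAt_const t z).prodMk (hasDerivAt_id t)
    have h3 : HasDerivAt (fun s => T (z, s)) (fderiv ℝ T (z, t) (0, 1)) t :=
      h1.comp_hasDerivAt t h2
    have h4 : HasDerivAt (fun s : ℝ => N * s) N t := by
      simpa using (hasDerivAt_id t).const_mul N
    exact h4.add h3
  -- strict monotonicity of vertical sections
  have hmono : ∀ z : Fin (n - 1) → ℝ, StrictMonoOn (fun s => N * s + T (z, s)) (Set.Ioi 0) := by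
    intro z
    apply strictMonoOn_of_deriv_pos (convex_Ioi 0)
    · intro s hs
      exact ((hHD z s hs).continuousAt).continuousWithinAt
    · intro s hs
      rw [interior_Ioi] at hs
      rw [(hHD z s hs).deriv]
      have h5 := hder (z, s) hs
      have h6 : -(c * K) ≤ fderiv ℝ T (z, s) (0, 1) := neg_le_of_abs_le h5
      linarith
  have hcont : ∀ z : Fin (n - 1) → ℝ, ContinuousOn (fun s => N * s + T (z, s)) (Set.Ioi 0) :=
    fun z s hs => ((hHD z s hs).continuousAt).continuousWithinAt
  -- lower and upper bounds for the sections
  have hlow : ∀ (z : Fin (n - 1) → ℝ) (t : ℝ), 0 < t →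
      N * t + T (z, t) ≥ (N - K) * t + φ z := by
    intro z t ht
    have := hA z t ht
    have h7 : -((K : ℝ) * t) ≤ T (z, t) - φ z := neg_le_of_abs_le this
    nlinarith
  have hup : ∀ (z : Fin (n - 1) → ℝ) (t : ℝ), 0 < t →
      N * t + T (z, t) ≤ (N + K) * t + φ z := by
    intro z t ht
    have := hA z t ht
    have h7 : T (z, t) - φ z ≤ (K : ℝ) * t := le_of_abs_le this
    nlinarith
  constructor
  · -- MapsTo
    intro p hp
    simp only [Set.mem_setOf_eq] at hp ⊢
    have := hlow p.1 p.2 hp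
    nlinarith
  constructor
  · -- InjOn
    intro p hp q hq heq
    simp only [Set.mem_setOf_eq] at hp hq
    simp only [Prod.mk.injEq] at heq
    obtain ⟨h1, h2⟩ := heq
    have h3 : p.2 = q.2 := by
      apply (hmono p.1).injOn hp hq
      show N * p.2 + T (p.1, p.2) = N * q.2 + T (p.1, q.2)
      rw [Prod.mk.eta, h1, Prod.mk.eta]
      exact h2
    exact Prod.ext h1 h3
  · -- SurjOn
    intro x hx
    simp only [Set.mem_setOf_eq] at hx
    set z := x.1 with hz
    set v := x.2 with hv
    set f : ℝ → ℝ := fun s => N * s + T (z, s) with hf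
    -- choose t₁ small with f t₁ < v
    have hvz : 0 < v - φ z := sub_pos.2 hx
    have hNK2 : (0:ℝ) < 2 * (N + K) := by nlinarith
    obtain ⟨t₁, ht₁pos, ht₁⟩ : ∃ t₁ : ℝ, 0 < t₁ ∧ f t₁ < v := by
      refine ⟨(v - φ z) / (2 * (N + K)), div_pos hvz hNK2, ?_⟩
      have h8 := hup z ((v - φ z) / (2 * (N + K))) (div_pos hvz hNK2)
      have h9 : (N + (K:ℝ)) * ((v - φ z) / (2 * (N + K))) = (v - φ z) / 2 := by
        have hne : (2:ℝ) * (N + K) ≠ 0 := hNK2.ne'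
        field_simp
        exact div_self (by linarith)
      simp only [hf]
      calc N * ((v - φ z) / (2 * (N + K))) + T (z, (v - φ z) / (2 * (N + K)))
          ≤ (N + K) * ((v - φ z) / (2 * (N + K))) + φ z := h8
        _ = (v - φ z) / 2 + φ z := by rw [h9]
        _ < v := by linarith
    -- choose t₂ large with v < f t₂
    obtain ⟨t₂, ht₂pos, ht₂, ht₁₂⟩ : ∃ t₂ : ℝ, 0 < t₂ ∧ v < f t₂ ∧ t₁ ≤ t₂ := by
      refine ⟨max t₁ ((v - φ z + 1) / (N - K)), lt_of_lt_of_le ht₁pos (le_max_left _ _), ?_,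
        le_max_left _ _⟩
      have hpos2 : 0 < max t₁ ((v - φ z + 1) / (N - K)) :=
        lt_of_lt_of_le ht₁pos (le_max_left _ _)
      have h10 := hlow z _ hpos2
      have h11 : (v - φ z + 1) / (N - K) ≤ max t₁ ((v - φ z + 1) / (N - K)) := le_max_right _ _
      have hNK : 0 < N - K := by linarith
      have h12 : v - φ z + 1 ≤ (N - K) * max t₁ ((v - φ z + 1) / (N - K)) := by
        rw [← div_le_iff₀' hNK]
        exact h11
      simp only [hf]
      nlinarith
    -- intermediate value theorem
    have hIcc : Set.Icc t₁ t₂ ⊆ Set.Ioi 0 := fun s hs => lt_of_lt_of_le ht₁pos hs.1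
    have hcf : ContinuousOn f (Set.Icc t₁ t₂) := (hcont z).mono hIcc
    have hmemI : v ∈ Set.Icc (f t₁) (f t₂) := ⟨le_of_lt ht₁, le_of_lt ht₂⟩
    obtain ⟨t, htI, htv⟩ := intermediate_value_Icc ht₁₂ hcf hmemI
    refine ⟨(z, t), ?_, ?_⟩
    · exact lt_of_lt_of_le ht₁pos htI.1
    · show (z, f t) = x
      rw [htv]
end
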